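/- The Black–Scholes call price function satisfies the Black–Scholes partial differential equation: for C(t,s) := s·Φ(d₁(t,s)) − K·e^{−r(T−t)}·Φ(d₂(t,s)) with d₁(t,s) = (ln(s/K) + (r + σ²/2)(T − t))/(σ√(T − t)) and d₂(t,s) = d₁(t,s) − σ√(T − t), one has for every 0 ≤ t < T and s > 0: ∂C/∂t (t,s) + (1/2)σ²s²·∂²C/∂s² (t,s) + r·s·∂C/∂s (t,s) − r·C(t,s) = 0. -/

import Mathlib

open MeasureTheory

noncomputable def BSphi (x : ℝ) : ℝ := Real.exp (-x ^ 2 / 2) / Real.sqrt (2 * Real.pi)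

lemma BSphi_cont : Continuous BSphi := by
  unfold BSphi; fun_prop

lemma BSphi_integrable : Integrable BSphi := by
  have h : Integrable (fun x : ℝ => Real.exp (-(1/2) * x ^ 2)) :=
    integrable_exp_neg_mul_sq (by norm_num)
  have h2 := h.div_const (Real.sqrt (2 * Real.pi))
  convert h2 using 2 with x
  unfold BSphi
  ring_nf

lemma hasDerivAt_Phi (Φ : ℝ → ℝ)
    (hΦ : ∀ y, Φ y = ∫ x in Set.Iic y, Real.exp (-x ^ 2 / 2) / Real.sqrt (2 * Real.pi))
    (y : ℝ) : HasDerivAt Φ (BSphi y) y := by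
  have hfun : Φ = fun z => (∫ x in Set.Iic (0:ℝ), BSphi x) + ∫ x in (0:ℝ)..z, BSphi x := by
    funext z
    rw [hΦ]
    have h := intervalIntegral.integral_Iic_sub_Iic
      (BSphi_integrable.integrableOn (s := Set.Iic (0:ℝ)))
      (BSphi_integrable.integrableOn (s := Set.Iic z))
    have : (∫ x in Set.Iic z, Real.exp (-x ^ 2 / 2) / Real.sqrt (2 * Real.pi))
        = ∫ x in Set.Iic z, BSphi x := rfl
    rw [this]
    linarith
  rw [hfun]
  exact ((BSphi_cont.integral_hasStrictDerivAt 0 y).hasDerivAt).const_add _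

lemma BS_identity (K σ T r : ℝ) (hK : 0 < K) (hσ : 0 < σ)
    (d₁ d₂ : ℝ → ℝ → ℝ)
    (hd₁ : ∀ t s, d₁ t s
      = (Real.log (s / K) + (r + σ ^ 2 / 2) * (T - t)) / (σ * Real.sqrt (T - t)))
    (hd₂ : ∀ t s, d₂ t s = d₁ t s - σ * Real.sqrt (T - t))
    (t u : ℝ) (htT : t < T) (hu : 0 < u) :
    K * Real.exp (-r * (T - t)) * BSphi (d₂ t u) = u * BSphi (d₁ t u) := by
  have hτ : 0 < T - t := by linarith
  set v : ℝ := Real.sqrt (T - t) with hv_def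
  have hv : 0 < v := Real.sqrt_pos.mpr hτ
  have hv2 : v ^ 2 = T - t := Real.sq_sqrt hτ.le
  have h1 : d₁ t u * (σ * v) = Real.log (u / K) + (r + σ ^ 2 / 2) * (T - t) := by
    rw [hd₁, ← hv_def]
    field_simp
  have e1 : -(d₂ t u) ^ 2 / 2 = -(d₁ t u) ^ 2 / 2 + (Real.log (u / K) + r * (T - t)) := by
    rw [hd₂]
    linear_combination h1 - (σ ^ 2 / 2) * hv2
  have e2 : Real.exp (-(d₂ t u) ^ 2 / 2)
      = Real.exp (-(d₁ t u) ^ 2 / 2) * ((u / K) * Real.exp (r * (T - t))) := by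
    rw [e1, Real.exp_add, Real.exp_add, Real.exp_log (by positivity)]
  have e3 : Real.exp (-r * (T - t)) * Real.exp (r * (T - t)) = 1 := by
    rw [← Real.exp_add]; ring_nf; exact Real.exp_zero
  unfold BSphi
  rw [e2, show -r * (T - t) = -(r * (T - t)) by ring, Real.exp_neg]
  have hE : Real.exp (r * (T - t)) ≠ 0 := (Real.exp_pos _).ne'
  field_simp

/-- The Black–Scholes call price function satisfies the Black–Scholes PDE. -/
theorem BS_call_price_satisfies_BS_PDE
    (K σ T r : ℝ) (hK : 0 < K) (hσ : 0 < σ) (hT : 0 < T)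
    (Φ : ℝ → ℝ)
    (hΦ : ∀ y, Φ y = ∫ x in Set.Iic y, Real.exp (-x ^ 2 / 2) / Real.sqrt (2 * Real.pi))
    (d₁ d₂ : ℝ → ℝ → ℝ)
    (hd₁ : ∀ t s, d₁ t s
      = (Real.log (s / K) + (r + σ ^ 2 / 2) * (T - t)) / (σ * Real.sqrt (T - t)))
    (hd₂ : ∀ t s, d₂ t s = d₁ t s - σ * Real.sqrt (T - t))
    (C : ℝ → ℝ → ℝ)
    (hC : ∀ t s, C t s = s * Φ (d₁ t s) - K * Real.exp (-r * (T - t)) * Φ (d₂ t s)) :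
    ∀ t s : ℝ, 0 ≤ t → t < T → 0 < s →
      deriv (fun τ => C τ s) t
        + (1 / 2) * σ ^ 2 * s ^ 2 * deriv (fun u => deriv (fun w => C t w) u) s
        + r * s * deriv (fun u => C t u) s
        - r * C t s = 0 := by
  intro t s ht htT hs
  have hτ : 0 < T - t := by linarith
  have hv : 0 < Real.sqrt (T - t) := Real.sqrt_pos.mpr hτ
  set v : ℝ := Real.sqrt (T - t) with hv_def
  -- derivative of d₁ t · at a point u > 0
  have hd_space : ∀ u : ℝ, 0 < u →
      HasDerivAt (fun w => d₁ t w) (1 / u / (σ * v)) u := by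
    intro u hu
    have h1 : HasDerivAt
        (fun w : ℝ => (Real.log w - Real.log K + (r + σ ^ 2 / 2) * (T - t)) / (σ * v))
        (1 / u / (σ * v)) u := by
      have := ((Real.hasDerivAt_log hu.ne').sub_const (Real.log K)).add_const
        ((r + σ ^ 2 / 2) * (T - t))
      simpa using this.div_const (σ * v)
    refine h1.congr_of_eventuallyEq ?_
    filter_upwards [eventually_gt_nhds hu] with w hw
    rw [hd₁, ← hv_def, Real.log_div hw.ne' hK.ne']
  -- spatial first derivative of C
  have hCs : ∀ u : ℝ, 0 < u → HasDerivAt (fun w => C t w) (Φ (d₁ t u)) u := by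
    intro u hu
    have hd := hd_space u hu
    have hΦ₁ : HasDerivAt (fun w => Φ (d₁ t w)) (BSphi (d₁ t u) * (1 / u / (σ * v))) u :=
      (hasDerivAt_Phi Φ hΦ (d₁ t u)).comp u hd
    have hd2 : HasDerivAt (fun w => d₂ t w) (1 / u / (σ * v)) u := by
      have h := hd.sub_const (σ * v)
      refine h.congr_of_eventuallyEq (.of_forall fun w => ?_)
      show d₂ t w = d₁ t w - σ * v
      rw [hd₂, ← hv_def]
    have hΦ₂ : HasDerivAt (fun w => Φ (d₂ t w)) (BSphi (d₂ t u) * (1 / u / (σ * v))) u :=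
      (hasDerivAt_Phi Φ hΦ (d₂ t u)).comp u hd2
    have h3 : HasDerivAt (fun w => w * Φ (d₁ t w))
        (1 * Φ (d₁ t u) + u * (BSphi (d₁ t u) * (1 / u / (σ * v)))) u :=
      (hasDerivAt_id u).mul hΦ₁
    have h4 : HasDerivAt (fun w => K * Real.exp (-r * (T - t)) * Φ (d₂ t w))
        (K * Real.exp (-r * (T - t)) * (BSphi (d₂ t u) * (1 / u / (σ * v)))) u :=
      hΦ₂.const_mul _
    have h5 := h3.sub h4
    have hfun : (fun w => C t w)
        = fun w => w * Φ (d₁ t w) - K * Real.exp (-r * (T - t)) * Φ (d₂ t w) :=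
      funext fun w => hC t w
    rw [hfun]
    have hid := BS_identity K σ T r hK hσ d₁ d₂ hd₁ hd₂ t u htT hu
    have hval : 1 * Φ (d₁ t u) + u * (BSphi (d₁ t u) * (1 / u / (σ * v)))
        - K * Real.exp (-r * (T - t)) * (BSphi (d₂ t u) * (1 / u / (σ * v)))
        = Φ (d₁ t u) := by
      rw [show K * Real.exp (-r * (T - t)) * (BSphi (d₂ t u) * (1 / u / (σ * v)))
          = (K * Real.exp (-r * (T - t)) * BSphi (d₂ t u)) * (1 / u / (σ * v)) by ring, hid]
      ring
    exact hval ▸ h5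
  -- value of spatial derivative and second derivative
  have hderiv1 : deriv (fun u => C t u) s = Φ (d₁ t s) := (hCs s hs).deriv
  have heq : (fun u => deriv (fun w => C t w) u) =ᶠ[nhds s] fun u => Φ (d₁ t u) := by
    filter_upwards [eventually_gt_nhds hs] with u hu
    exact (hCs u hu).deriv
  have hderiv2 : deriv (fun u => deriv (fun w => C t w) u) s
      = BSphi (d₁ t s) * (1 / s / (σ * v)) := by
    rw [heq.deriv_eq]
    exact ((hasDerivAt_Phi Φ hΦ (d₁ t s)).comp s (hd_space s hs)).deriv
  -- time derivative
  have hsqrt : HasDerivAt (fun t' => Real.sqrt (T - t')) (1 / (2 * v) * (-1)) t := by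
    have h := (Real.hasDerivAt_sqrt hτ.ne').comp t ((hasDerivAt_id t).const_sub T)
    simpa [hv_def, Function.comp_def] using h
  have hexp : HasDerivAt (fun t' => Real.exp (-r * (T - t')))
      (Real.exp (-r * (T - t)) * (-r * -1)) t :=
    (((hasDerivAt_id t).const_sub T).const_mul (-r)).exp
  have hsg : HasDerivAt (fun t' => σ * Real.sqrt (T - t')) (σ * (1 / (2 * v) * (-1))) t :=
    hsqrt.const_mul σ
  have hinv : HasDerivAt (fun t' => (σ * Real.sqrt (T - t'))⁻¹)
      (-(σ * (1 / (2 * v) * (-1))) / (σ * v) ^ 2) t := by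
    have := hsg.inv (by positivity)
    simpa [hv_def, Pi.inv_def] using this
  have hN : HasDerivAt (fun t' => Real.log (s / K) + (r + σ ^ 2 / 2) * (T - t'))
      ((r + σ ^ 2 / 2) * -1) t :=
    (((hasDerivAt_id t).const_sub T).const_mul (r + σ ^ 2 / 2)).const_add _
  set D₁ : ℝ := (r + σ ^ 2 / 2) * -1 * (σ * v)⁻¹
      + (Real.log (s / K) + (r + σ ^ 2 / 2) * (T - t)) * (-(σ * (1 / (2 * v) * (-1))) / (σ * v) ^ 2)
    with hD₁
  have hd₁t : HasDerivAt (fun t' => d₁ t' s) D₁ t := by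
    have h := hN.mul hinv
    have hfun : (fun t' => d₁ t' s)
        = fun t' => (Real.log (s / K) + (r + σ ^ 2 / 2) * (T - t'))
            * (σ * Real.sqrt (T - t'))⁻¹ := by
      funext t'; rw [hd₁, div_eq_mul_inv]
    rw [hfun, hD₁]
    simpa [hv_def, Pi.mul_def] using h
  have hd₂t : HasDerivAt (fun t' => d₂ t' s) (D₁ - σ * (1 / (2 * v) * (-1))) t := by
    have h := hd₁t.sub hsg
    refine h.congr_of_eventuallyEq (.of_forall fun t' => ?_)
    show d₂ t' s = d₁ t' s - σ * Real.sqrt (T - t')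
    rw [hd₂]
  have hΦ₁t : HasDerivAt (fun t' => Φ (d₁ t' s)) (BSphi (d₁ t s) * D₁) t :=
    (hasDerivAt_Phi Φ hΦ (d₁ t s)).comp t hd₁t
  have hΦ₂t : HasDerivAt (fun t' => Φ (d₂ t' s))
      (BSphi (d₂ t s) * (D₁ - σ * (1 / (2 * v) * (-1)))) t :=
    (hasDerivAt_Phi Φ hΦ (d₂ t s)).comp t hd₂t
  have hCt : HasDerivAt (fun t' => C t' s)
      (s * (BSphi (d₁ t s) * D₁)
        - K * (Real.exp (-r * (T - t)) * (-r * -1) * Φ (d₂ t s)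
          + Real.exp (-r * (T - t)) * (BSphi (d₂ t s) * (D₁ - σ * (1 / (2 * v) * (-1)))))) t := by
    have h := (hΦ₁t.const_mul s).sub ((hexp.mul hΦ₂t).const_mul K)
    have hfun : (fun t' => C t' s)
        = fun t' => s * Φ (d₁ t' s) - K * (Real.exp (-r * (T - t')) * Φ (d₂ t' s)) := by
      funext t'; rw [hC]; ring
    rw [hfun]
    exact h
  have hderiv0 : deriv (fun τ => C τ s) t
      = s * (BSphi (d₁ t s) * D₁)
        - K * (Real.exp (-r * (T - t)) * (-r * -1) * Φ (d₂ t s)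
          + Real.exp (-r * (T - t)) * (BSphi (d₂ t s) * (D₁ - σ * (1 / (2 * v) * (-1))))) :=
    hCt.deriv
  -- final algebra
  have hid := BS_identity K σ T r hK hσ d₁ d₂ hd₁ hd₂ t s htT hs
  have hE : Real.exp (-r * (T - t)) ≠ 0 := (Real.exp_pos _).ne'
  have hφ₂ : BSphi (d₂ t s) = s * BSphi (d₁ t s) / (K * Real.exp (-r * (T - t))) := by
    rw [eq_div_iff (by positivity)]
    linear_combination hid
  rw [hderiv0, hderiv1, hderiv2, hC t s, hφ₂]
  field_simp
  ring
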